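/- Let Λ be a block and λ ∈ Λ. The set of weights μ with μ ⊂ λ is finite if and only if def(Λ) < ∞, where def(Λ) := sup{def(μ) : μ ∈ Λ}. -/

import Mathlib

/-!
Common combinatorial framework for Brundan–Stroppel, "Highest weight categories arising
from Khovanov's diagram algebra I: cellularity": weights, blocks, the Bruhat order,
cup/cap diagrams, oriented cup/cap/circle diagrams, degrees, and the abstract properties
of the diagrammatically defined multiplications.
-/

namespace BrundanStroppel

open scoped Classical

inductive Label : Type
  | nought : Label
  | cross : Label
  | down : Label
  | up : Label
  deriving DecidableEq

def Label.flip : Label → Label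
  | Label.down => Label.up
  | Label.up => Label.down
  | l => l

/-- A weight: a labelling of the vertices (a set of consecutive integers) of the number
line by `∘`, `×`, `∨` (down) or `∧` (up), such that outside a finite set of vertices it is
impossible to find two vertices labelled `∨ ∧` in that order from left to right. -/
structure Weight where
  label : ℤ → Option Label
  consecutive : ∀ a b c : ℤ, a ≤ b → b ≤ c →
    (label a).isSome → (label c).isSome → (label b).isSome
  tail : ∃ S : Finset ℤ, ∀ i j : ℤ, i < j → i ∉ S → j ∉ S →
    ¬(label i = some Label.down ∧ label j = some Label.up)

def Weight.support (w : Weight) : Set ℤ := {i : ℤ | (w.label i).isSome}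

/-- `Sim v w` (`v ∼ w`): `w` is obtained from `v` by permuting the `∨`'s and the `∧`'s
(and doing nothing to the `∘`'s and `×`'s). -/
def Sim (v w : Weight) : Prop :=
  (∀ i : ℤ, (v.label i).isSome ↔ (w.label i).isSome) ∧
  (∀ i : ℤ, v.label i = some Label.nought ↔ w.label i = some Label.nought) ∧
  (∀ i : ℤ, v.label i = some Label.cross ↔ w.label i = some Label.cross) ∧
  Nonempty ({i : ℤ | v.label i = some Label.down} ≃ {i : ℤ | w.label i = some Label.down}) ∧
  Nonempty ({i : ℤ | v.label i = some Label.up} ≃ {i : ℤ | w.label i = some Label.up})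

/-- A block is a `∼`-equivalence class of weights. -/
def IsBlock (Λ : Set Weight) : Prop := ∃ w : Weight, Λ = {v : Weight | Sim w v}

/-- One step up in the Bruhat order: a `∨ ∧` pair of labels (in this order from left to
right) is swapped to `∧ ∨`; getting bigger means `∨`'s move to the right. -/
def BruhatStep (v w : Weight) : Prop :=
  ∃ i j : ℤ, i < j ∧
    v.label i = some Label.down ∧ v.label j = some Label.up ∧
    w.label i = some Label.up ∧ w.label j = some Label.down ∧
    ∀ k : ℤ, k ≠ i → k ≠ j → w.label k = v.label k

/-- The Bruhat order on weights. -/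
def BruhatLE : Weight → Weight → Prop := Relation.ReflTransGen BruhatStep

def BruhatLT (v w : Weight) : Prop := BruhatLE v w ∧ v ≠ w

/-- The data of a cup diagram (or, mirrored in the number line, of a cap diagram):
finitely many cups (lower semicircles) and some rays (going down to infinity) attached to
vertices of the number line, with no crossings. -/
structure ArcDiagram where
  support : Set ℤ
  consecutive : ∀ a b c : ℤ, a ≤ b → b ≤ c → a ∈ support → c ∈ support → b ∈ support
  cups : Set (ℤ × ℤ)
  rays : Set ℤ
  cups_finite : cups.Finite
  cups_lt : ∀ p ∈ cups, p.1 < p.2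
  cups_subset : ∀ p ∈ cups, p.1 ∈ support ∧ p.2 ∈ support
  rays_subset : rays ⊆ support
  cups_disjoint : ∀ p ∈ cups, ∀ q ∈ cups, p ≠ q →
    p.1 ≠ q.1 ∧ p.1 ≠ q.2 ∧ p.2 ≠ q.1 ∧ p.2 ≠ q.2
  rays_cups_disjoint : ∀ p ∈ cups, ∀ r ∈ rays, r ≠ p.1 ∧ r ≠ p.2
  cups_noncrossing : ∀ p ∈ cups, ∀ q ∈ cups, p.1 < q.1 → q.1 < p.2 → q.2 < p.2
  rays_cups_noncrossing : ∀ p ∈ cups, ∀ r ∈ rays, ¬(p.1 < r ∧ r < p.2)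

/-- The mirror image `c*` of a diagram in the number line, turning a cup diagram into a
cap diagram and vice versa; on the underlying combinatorial data it is the identity. -/
def ArcDiagram.star (c : ArcDiagram) : ArcDiagram := c

/-- A free vertex of a diagram: not the endpoint of any cup or ray. -/
def ArcDiagram.Free (c : ArcDiagram) (i : ℤ) : Prop :=
  i ∈ c.support ∧ i ∉ c.rays ∧ ∀ p ∈ c.cups, i ≠ p.1 ∧ i ≠ p.2

/-- `c w` is an oriented cup diagram. -/
def OrientedCup (c : ArcDiagram) (w : Weight) : Prop :=
  c.support = w.support ∧
  (∀ i : ℤ, c.Free i → w.label i = some Label.nought ∨ w.label i = some Label.cross) ∧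
  (∀ p ∈ c.cups,
    (w.label p.1 = some Label.down ∧ w.label p.2 = some Label.up) ∨
    (w.label p.1 = some Label.up ∧ w.label p.2 = some Label.down)) ∧
  (∀ r ∈ c.rays, w.label r = some Label.down ∨ w.label r = some Label.up) ∧
  (∀ r ∈ c.rays, ∀ t ∈ c.rays, r < t →
    ¬(w.label r = some Label.down ∧ w.label t = some Label.up))

/-- `w b` is an oriented cap diagram iff `b* w` is an oriented cup diagram. -/
def OrientedCap (w : Weight) (b : ArcDiagram) : Prop := OrientedCup b.star w

/-- The degree of the oriented cup diagram `c w`: its number of clockwise cups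
(a cup is clockwise if its leftmost vertex is labelled `∧`). -/
noncomputable def cupDeg (c : ArcDiagram) (w : Weight) : ℕ :=
  {p ∈ c.cups | w.label p.1 = some Label.up}.ncard

/-- The degree of the oriented cap diagram `w b`: its number of clockwise caps. -/
noncomputable def capDeg (w : Weight) (b : ArcDiagram) : ℕ := cupDeg b.star w

/-- `IsUnderline w c` says that `c = w̲`, i.e. `c w` is an oriented cup diagram of
degree `0`, all of whose cups are anticlockwise. -/
def IsUnderline (w : Weight) (c : ArcDiagram) : Prop :=
  OrientedCup c w ∧ ∀ p ∈ c.cups, w.label p.1 = some Label.down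

/-- `IsOverline w b` says that `b = w̄ = (w̲)*`. -/
def IsOverline (w : Weight) (b : ArcDiagram) : Prop := IsUnderline w b.star

/-- `SubW v w` is the relation `v ⊂ w`: `v ∼ w` and `v̲ w` is an oriented cup diagram.
(Equivalently `w ⊃ v`: `w ∼ v` and `w v̄` is an oriented cap diagram.) -/
def SubW (v w : Weight) : Prop :=
  Sim v w ∧ ∃ c : ArcDiagram, IsUnderline v c ∧ OrientedCup c w

def arcAdj (a b : ArcDiagram) (i j : ℤ) : Prop :=
  (i, j) ∈ a.cups ∨ (j, i) ∈ a.cups ∨ (i, j) ∈ b.cups ∨ (j, i) ∈ b.cups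

def reaches (a b : ArcDiagram) : ℤ → ℤ → Prop := Relation.ReflTransGen (arcAdj a b)

/-- `C` is a circle of the circle diagram `a b` (cup diagram `a` glued under cap diagram
`b`): a connected component of the diagram in which every vertex lies both on a cup of `a`
and on a cap of `b`. -/
def IsCircle (a b : ArcDiagram) (C : Set ℤ) : Prop :=
  (∃ v ∈ C, ∀ j : ℤ, j ∈ C ↔ reaches a b v j) ∧
  ∀ i ∈ C, (∃ j : ℤ, (i, j) ∈ a.cups ∨ (j, i) ∈ a.cups) ∧
           (∃ j : ℤ, (i, j) ∈ b.cups ∨ (j, i) ∈ b.cups)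

/-- The vertex `i` lies on a circle (rather than on a line) of the circle diagram `a b`:
its connected component contains no ray. -/
def OnCircle (a b : ArcDiagram) (i : ℤ) : Prop :=
  ∀ j : ℤ, reaches a b i j → j ∉ a.rays ∧ j ∉ b.rays

/-- A Khovanov block of rank `n`: a block consisting of bounded weights having exactly
`n` labels `∨` and `n` labels `∧`. -/
def IsKhovanovBlock (Λ : Set Weight) (n : ℕ) : Prop :=
  IsBlock Λ ∧ ∀ w ∈ Λ, w.support.Finite ∧
    {i : ℤ | w.label i = some Label.down}.ncard = n ∧
    {i : ℤ | w.label i = some Label.up}.ncard = n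

/-- An oriented circle diagram `a λ b` with weight `λ ∈ Λ`. -/
structure OCD (Λ : Set Weight) where
  a : ArcDiagram
  wt : Weight
  b : ArcDiagram
  wt_mem : wt ∈ Λ
  oriented_a : OrientedCup a wt
  oriented_b : OrientedCap wt b

/-- A closed oriented circle diagram: one with no rays (hence no lines). -/
def OCD.Closed {Λ : Set Weight} (x : OCD Λ) : Prop := x.a.rays = ∅ ∧ x.b.rays = ∅

/-- The degree of an oriented circle diagram: its number of clockwise cups and caps. -/
noncomputable def OCD.deg {Λ : Set Weight} (x : OCD Λ) : ℕ :=
  cupDeg x.a x.wt + capDeg x.wt x.b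

/-- The anti-automorphism `(a λ b) ↦ (b* λ a*)` on the level of basis vectors. -/
def OCD.flip {Λ : Set Weight} (x : OCD Λ) : OCD Λ where
  a := x.b
  wt := x.wt
  b := x.a
  wt_mem := x.wt_mem
  oriented_a := x.oriented_b
  oriented_b := x.oriented_a

/-- The bilinear extension to the whole diagram algebra of a multiplication given by
structure constants on basis vectors. -/
noncomputable def extendMul {B : Type} {F : Type} [Field F]
    (m : B → B → (B →₀ F)) (s t : B →₀ F) : B →₀ F :=
  s.sum fun x c => t.sum fun y d => (c * d) • m x y

/-- The properties of the diagrammatically defined multiplication which come directly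
from its construction: the product `(a λ b)(c μ d)` of two basis vectors is zero unless
`b* = c`, the multiplication is associative, and it is compatible with the grading. -/
def IsDiagramMul {F : Type} [Field F] (Λ : Set Weight)
    (m : OCD Λ → OCD Λ → (OCD Λ →₀ F)) : Prop :=
  (∀ x y : OCD Λ, x.b.star ≠ y.a → m x y = 0) ∧
  (∀ x y z : OCD Λ,
    extendMul m (m x y) (Finsupp.single z 1) = extendMul m (Finsupp.single x 1) (m y z)) ∧
  (∀ x y z : OCD Λ, (m x y) z ≠ 0 → z.deg = x.deg + y.deg)

/-- Triangularity of the product `(a λ b)(c μ d)` of two basis vectors, with scalars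
`s a λ b μ ∈ {0,1}` depending only on `a λ b` and `μ` but not on `d`:
`(a λ b)(c μ d) = 0` if `b ≠ c*`; it equals `s(aλb)(μ)·(a μ d) + (†)` if `b = c*` and
`a μ` is oriented; and it equals `(†)` otherwise, where `(†)` is a linear combination of
basis vectors `(a ν d)` with `ν > μ`; moreover `s(aλb)(μ) = 1` if `b = λ̄ = c*` and
`a μ` is oriented. -/
def TriangularAt {F : Type} [Field F] {Λ : Set Weight}
    (m : OCD Λ → OCD Λ → (OCD Λ →₀ F))
    (s : ArcDiagram → Weight → ArcDiagram → Weight → F)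
    (x y : OCD Λ) : Prop :=
  (x.b.star ≠ y.a → m x y = 0) ∧
  (x.b.star = y.a → OrientedCup x.a y.wt →
    (∀ z : OCD Λ, (m x y) z ≠ 0 →
      z.a = x.a ∧ z.b = y.b ∧ (z.wt = y.wt ∨ BruhatLT y.wt z.wt)) ∧
    (∀ z : OCD Λ, z.a = x.a → z.b = y.b → z.wt = y.wt →
      (m x y) z = s x.a x.wt x.b y.wt)) ∧
  (x.b.star = y.a → ¬ OrientedCup x.a y.wt →
    ∀ z : OCD Λ, (m x y) z ≠ 0 → z.a = x.a ∧ z.b = y.b ∧ BruhatLT y.wt z.wt) ∧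
  (x.b.star = y.a → IsOverline x.wt x.b → OrientedCup x.a y.wt →
    s x.a x.wt x.b y.wt = 1)

/-- `w` is the closure `cl(v)` of the bounded weight `v`: `p` new vertices labelled `∨`
are added at the left end of the number line and `q` new vertices labelled `∧` at the
right end. -/
def IsClosureOf (p q : ℕ) (v w : Weight) : Prop :=
  v.support.Finite ∧
  (∀ i ∈ v.support, w.label i = v.label i) ∧
  ∃ L R : Set ℤ,
    w.support = L ∪ v.support ∪ R ∧
    L.Finite ∧ R.Finite ∧ L.ncard = p ∧ R.ncard = q ∧
    (∀ a ∈ L, (∀ i ∈ v.support, a < i) ∧ ∀ r ∈ R, a < r) ∧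
    (∀ r ∈ R, ∀ i ∈ v.support, i < r) ∧
    (∀ a ∈ L, w.label a = some Label.down) ∧
    (∀ r ∈ R, w.label r = some Label.up)

/-- `v ≺ w` for weights: `v` is bounded, its vertices form a subset of the vertices of
`w`, the labels agree on the vertices of `v`, and amongst the remaining vertices of `w`
no two are labelled `∨ ∧` in that order from left to right. -/
def WPrec (v w : Weight) : Prop :=
  v.support.Finite ∧ v.support ⊆ w.support ∧
  (∀ i ∈ v.support, w.label i = v.label i) ∧
  ∀ i j : ℤ, i < j → i ∈ w.support → j ∈ w.support → i ∉ v.support → j ∉ v.support →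
    ¬(w.label i = some Label.down ∧ w.label j = some Label.up)

/-- `Γ ≺ Λ` for blocks. -/
def BPrec (Γ Λ : Set Weight) : Prop := ∃ v ∈ Γ, ∃ w ∈ Λ, WPrec v w


/-! ### Auxiliary definitions and lemmas for Statement 5 -/

section Statement5Aux

lemma Weight.ext' {v w : Weight} (h : v.label = w.label) : v = w := by
  cases v; cases w; simpa using h

def dset (w : Weight) : Set ℤ := {i | w.label i = some Label.down}
def uset (w : Weight) : Set ℤ := {i | w.label i = some Label.up}
def vset (w : Weight) : Set ℤ := dset w ∪ uset w

lemma label_cases (w : Weight) (k : ℤ) :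
    w.label k = none ∨ w.label k = some Label.nought ∨ w.label k = some Label.cross ∨
      w.label k = some Label.down ∨ w.label k = some Label.up := by
  rcases h : w.label k with _ | l
  · exact Or.inl rfl
  · cases l <;> simp

lemma mem_vset_iff {w : Weight} {k : ℤ} :
    k ∈ vset w ↔ (w.label k).isSome ∧ w.label k ≠ some Label.nought ∧
      w.label k ≠ some Label.cross := by
  rcases label_cases w k with h | h | h | h | h <;>
    simp [vset, dset, uset, h, Set.mem_union, Set.mem_setOf_eq]

lemma vset_subset_support (w : Weight) : vset w ⊆ w.support := by
  intro k hk
  exact (mem_vset_iff.1 hk).1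

lemma Sim.symm' {v w : Weight} (h : Sim v w) : Sim w v := by
  obtain ⟨h1, h2, h3, ⟨e4⟩, ⟨e5⟩⟩ := h
  exact ⟨fun i => (h1 i).symm, fun i => (h2 i).symm, fun i => (h3 i).symm,
    ⟨e4.symm⟩, ⟨e5.symm⟩⟩

lemma Sim.trans' {u v w : Weight} (h : Sim u v) (h' : Sim v w) : Sim u w := by
  obtain ⟨h1, h2, h3, ⟨e4⟩, ⟨e5⟩⟩ := h
  obtain ⟨h1', h2', h3', ⟨e4'⟩, ⟨e5'⟩⟩ := h'
  exact ⟨fun i => (h1 i).trans (h1' i), fun i => (h2 i).trans (h2' i),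
    fun i => (h3 i).trans (h3' i), ⟨e4.trans e4'⟩, ⟨e5.trans e5'⟩⟩

lemma Sim.dset_equiv {v w : Weight} (h : Sim v w) : Nonempty (dset v ≃ dset w) := h.2.2.2.1

lemma Sim.uset_equiv {v w : Weight} (h : Sim v w) : Nonempty (uset v ≃ uset w) := h.2.2.2.2

lemma Sim.vset_eq {v w : Weight} (h : Sim v w) : vset v = vset w := by
  ext k
  rw [mem_vset_iff, mem_vset_iff]
  constructor
  · rintro ⟨a, b, c⟩
    exact ⟨(h.1 k).1 a, fun hh => b ((h.2.1 k).2 hh), fun hh => c ((h.2.2.1 k).2 hh)⟩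
  · rintro ⟨a, b, c⟩
    exact ⟨(h.1 k).2 a, fun hh => b ((h.2.1 k).1 hh), fun hh => c ((h.2.2.1 k).1 hh)⟩

lemma Sim.support_eq {v w : Weight} (h : Sim v w) : v.support = w.support := by
  ext k
  exact h.1 k

lemma finite_ncard_of_equiv {s t : Set ℤ} (e : s ≃ t) (ht : t.Finite) :
    s.Finite ∧ s.ncard = t.ncard := by
  have h1 : Finite t := ht.to_subtype
  have h2 : Finite s := Finite.of_equiv _ e.symm
  refine ⟨Set.finite_coe_iff.mp h2, ?_⟩
  rw [← Nat.card_coe_set_eq, ← Nat.card_coe_set_eq]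
  exact Nat.card_congr e

lemma infinite_of_equiv {s t : Set ℤ} (e : s ≃ t) (ht : t.Infinite) : s.Infinite := by
  intro hs
  exact ht (finite_ncard_of_equiv e.symm hs).1

lemma equiv_of_infinite {s t : Set ℤ} (hs : s.Infinite) (ht : t.Infinite) :
    Nonempty (s ≃ t) := by
  have h1 : Countable s := (Set.to_countable s).to_subtype
  have h2 : Countable t := (Set.to_countable t).to_subtype
  have h3 : Infinite s := hs.to_subtype
  have h4 : Infinite t := ht.to_subtype
  have e1 : Denumerable s := Classical.choice (nonempty_denumerable _)
  have e2 : Denumerable t := Classical.choice (nonempty_denumerable _)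
  exact ⟨(Denumerable.eqv s).trans (Denumerable.eqv t).symm⟩

/-- An infinite set of integers that is "unbounded above" has infinite tails. -/
lemma tail_infinite_of_unbdd_above {s : Set ℤ} (h : ∀ m : ℤ, ∃ x ∈ s, m < x) (m : ℤ) :
    (s ∩ Set.Ioi m).Infinite := by
  intro hfin
  obtain ⟨b, hb⟩ := hfin.bddAbove
  obtain ⟨x, hxs, hx⟩ := h (max b m)
  have : x ∈ s ∩ Set.Ioi m := ⟨hxs, lt_of_le_of_lt (le_max_right b m) hx⟩
  exact absurd (hb this) (not_le.2 (lt_of_le_of_lt (le_max_left b m) hx))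

lemma tail_infinite_of_unbdd_below {s : Set ℤ} (h : ∀ m : ℤ, ∃ x ∈ s, x < m) (m : ℤ) :
    (s ∩ Set.Iio m).Infinite := by
  intro hfin
  obtain ⟨b, hb⟩ := hfin.bddBelow
  obtain ⟨x, hxs, hx⟩ := h (min b m)
  have : x ∈ s ∩ Set.Iio m := ⟨hxs, lt_of_lt_of_le hx (min_le_right b m)⟩
  exact absurd (hb this) (not_le.2 (lt_of_lt_of_le hx (min_le_left b m)))

lemma unbdd_above_of_infinite_bddBelow {s : Set ℤ} (hs : s.Infinite) {b : ℤ}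
    (hb : ∀ x ∈ s, b ≤ x) (m : ℤ) : ∃ x ∈ s, m < x := by
  by_contra hc
  push_neg at hc
  exact hs ((Set.finite_Icc b m).subset fun x hx => ⟨hb x hx, hc x hx⟩)

lemma unbdd_below_of_infinite_bddAbove {s : Set ℤ} (hs : s.Infinite) {b : ℤ}
    (hb : ∀ x ∈ s, x ≤ b) (m : ℤ) : ∃ x ∈ s, x < m := by
  by_contra hc
  push_neg at hc
  exact hs ((Set.finite_Icc m b).subset fun x hx => ⟨hc x hx, hb x hx⟩)

/-- If every initial segment of `B` has at most `n` elements then `B` is finite. -/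
lemma finite_of_small_left {B : Set ℤ} {n : ℕ}
    (h : ∀ j ∈ B, (B ∩ Set.Iio j).Finite ∧ (B ∩ Set.Iio j).ncard ≤ n) : B.Finite := by
  by_contra hB
  replace hB : B.Infinite := hB
  obtain ⟨t, hts, htf, htn⟩ := hB.exists_subset_ncard_eq (n + 2)
  have hne : t.Nonempty := by
    rw [← Set.ncard_pos htf] at *
    omega
  obtain ⟨m, hmt, hmax'⟩ := Set.Finite.exists_maximalFor id t htf hne
  have hmax : ∀ x ∈ t, id m ≤ id x → id m = id x := fun x hx h => le_antisymm h (hmax' hx h)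
  have hsub : t \ {m} ⊆ B ∩ Set.Iio m := by
    rintro x ⟨hxt, hxm⟩
    refine ⟨hts hxt, ?_⟩
    rcases lt_trichotomy x m with hlt | rfl | hgt
    · exact hlt
    · exact absurd rfl hxm
    · exact absurd (hmax x hxt (le_of_lt hgt)) (by simpa using (ne_of_gt hgt).symm)
  have h1 : (t \ {m}).ncard = n + 1 := by
    rw [Set.ncard_diff_singleton_of_mem hmt, htn]; omega
  have h2 := Set.ncard_le_ncard hsub (h m (hts hmt)).1
  have h3 := (h m (hts hmt)).2
  rw [h1] at h2
  omega

lemma finite_of_small_right {B : Set ℤ} {n : ℕ}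
    (h : ∀ j ∈ B, (B ∩ Set.Ioi j).Finite ∧ (B ∩ Set.Ioi j).ncard ≤ n) : B.Finite := by
  by_contra hB
  replace hB : B.Infinite := hB
  obtain ⟨t, hts, htf, htn⟩ := hB.exists_subset_ncard_eq (n + 2)
  have hne : t.Nonempty := by
    rw [← Set.ncard_pos htf] at *
    omega
  obtain ⟨m, hmt, hmin'⟩ := Set.Finite.exists_minimalFor id t htf hne
  have hmin : ∀ x ∈ t, id x ≤ id m → id m = id x := fun x hx h => le_antisymm (hmin' hx h) h
  have hsub : t \ {m} ⊆ B ∩ Set.Ioi m := by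
    rintro x ⟨hxt, hxm⟩
    refine ⟨hts hxt, ?_⟩
    rcases lt_trichotomy x m with hlt | rfl | hgt
    · exact absurd (hmin x hxt (le_of_lt hlt)) (by simpa using (ne_of_lt hlt).symm)
    · exact absurd rfl hxm
    · exact hgt
  have h1 : (t \ {m}).ncard = n + 1 := by
    rw [Set.ncard_diff_singleton_of_mem hmt, htn]; omega
  have h2 := Set.ncard_le_ncard hsub (h m (hts hmt)).1
  have h3 := (h m (hts hmt)).2
  rw [h1] at h2
  omega

end Statement5Aux


section Statement5Diagrams

/-- The set of endpoints of cups of a diagram. -/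
def endset (c : ArcDiagram) : Set ℤ := Prod.fst '' c.cups ∪ Prod.snd '' c.cups

lemma endset_finite (c : ArcDiagram) : (endset c).Finite :=
  (c.cups_finite.image _).union (c.cups_finite.image _)

lemma endset_ncard_le (c : ArcDiagram) : (endset c).ncard ≤ 2 * c.cups.ncard := by
  show (Prod.fst '' c.cups ∪ Prod.snd '' c.cups).ncard ≤ 2 * c.cups.ncard
  have h1 := Set.ncard_union_le (Prod.fst '' c.cups) (Prod.snd '' c.cups)
  have h2 := Set.ncard_image_le (f := Prod.fst) c.cups_finite
  have h3 := Set.ncard_image_le (f := Prod.snd) c.cups_finite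
  omega

lemma mem_endset {c : ArcDiagram} {k : ℤ} :
    k ∈ endset c ↔ ∃ p ∈ c.cups, k = p.1 ∨ k = p.2 := by
  constructor
  · rintro (⟨p, hp, rfl⟩ | ⟨p, hp, rfl⟩)
    · exact ⟨p, hp, Or.inl rfl⟩
    · exact ⟨p, hp, Or.inr rfl⟩
  · rintro ⟨p, hp, rfl | rfl⟩
    · exact Or.inl ⟨p, hp, rfl⟩
    · exact Or.inr ⟨p, hp, rfl⟩

/-- Every `∨`- or `∧`-labelled vertex of an oriented cup diagram is on a ray or a cup. -/
lemma mem_rays_or_endset {c : ArcDiagram} {w : Weight} (h : OrientedCup c w) {k : ℤ}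
    (hk : k ∈ vset w) : k ∈ c.rays ∨ k ∈ endset c := by
  by_contra hc
  push_neg at hc
  have hfree : c.Free k := by
    refine ⟨?_, hc.1, ?_⟩
    · rw [h.1]
      exact vset_subset_support w hk
    · intro p hp
      constructor
      · intro hk1; exact hc.2 (mem_endset.2 ⟨p, hp, Or.inl hk1⟩)
      · intro hk2; exact hc.2 (mem_endset.2 ⟨p, hp, Or.inr hk2⟩)
  rcases h.2.1 k hfree with h1 | h1 <;>
  · rcases hk with h2 | h2 <;> simp [dset, uset, Set.mem_setOf_eq, h1] at h2
  

lemma IsUnderline.cup_left {w : Weight} {c : ArcDiagram} (h : IsUnderline w c)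
    {p : ℤ × ℤ} (hp : p ∈ c.cups) : w.label p.1 = some Label.down := h.2 p hp

lemma IsUnderline.cup_right {w : Weight} {c : ArcDiagram} (h : IsUnderline w c)
    {p : ℤ × ℤ} (hp : p ∈ c.cups) : w.label p.2 = some Label.up := by
  rcases h.1.2.2.1 p hp with ⟨h1, h2⟩ | ⟨h1, h2⟩
  · exact h2
  · rw [h.2 p hp] at h1; simp at h1

lemma IsUnderline.cups_ncard_le_uset {w : Weight} {c : ArcDiagram} (h : IsUnderline w c)
    (hf : (uset w).Finite) : c.cups.ncard ≤ (uset w).ncard := by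
  have hinj : Set.InjOn Prod.snd c.cups := by
    intro p hp q hq hpq
    by_contra hne
    exact (c.cups_disjoint p hp q hq hne).2.2.2 hpq
  have hsub : Prod.snd '' c.cups ⊆ uset w := by
    rintro x ⟨p, hp, rfl⟩
    exact h.cup_right hp
  calc c.cups.ncard = (Prod.snd '' c.cups).ncard := (Set.ncard_image_of_injOn hinj).symm
    _ ≤ (uset w).ncard := Set.ncard_le_ncard hsub hf

lemma IsUnderline.cups_ncard_le_dset {w : Weight} {c : ArcDiagram} (h : IsUnderline w c)
    (hf : (dset w).Finite) : c.cups.ncard ≤ (dset w).ncard := by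
  have hinj : Set.InjOn Prod.fst c.cups := by
    intro p hp q hq hpq
    by_contra hne
    exact (c.cups_disjoint p hp q hq hne).1 hpq
  have hsub : Prod.fst '' c.cups ⊆ dset w := by
    rintro x ⟨p, hp, rfl⟩
    exact h.cup_left hp
  calc c.cups.ncard = (Prod.fst '' c.cups).ncard := (Set.ncard_image_of_injOn hinj).symm
    _ ≤ (dset w).ncard := Set.ncard_le_ncard hsub hf

end Statement5Diagrams

section Statement5Inversions

/-- The `∧`'s which have some `∨` to their left. -/
def Aset (w : Weight) : Set ℤ := {j | j ∈ uset w ∧ ∃ i, i < j ∧ i ∈ dset w}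

/-- The `∨`'s which have some `∧` to their right. -/
def Bset (w : Weight) : Set ℤ := {i | i ∈ dset w ∧ ∃ j, i < j ∧ j ∈ uset w}

lemma aset_or_bset_finite (w : Weight) : (Aset w).Finite ∨ (Bset w).Finite := by
  by_contra hc
  push_neg at hc
  obtain ⟨hA, hB⟩ : (Aset w).Infinite ∧ (Bset w).Infinite := by
    constructor <;> [exact hc.1; exact hc.2]
  obtain ⟨S, hS⟩ := w.tail
  have hAS : (Aset w \ ↑S).Infinite := hA.diff S.finite_toSet
  have hBS : (Bset w \ ↑S).Infinite := hB.diff S.finite_toSet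
  -- S is nonempty: every element of Aset w \ S has a witness in S
  have hwit : ∀ j ∈ Aset w \ ↑S, ∃ i ∈ S, i < j ∧ i ∈ dset w := by
    rintro j ⟨⟨hju, i, hij, hid⟩, hjS⟩
    by_cases hiS : i ∈ S
    · exact ⟨i, hiS, hij, hid⟩
    · exact absurd ⟨hid, hju⟩ (hS i j hij hiS (by simpa using hjS))
  obtain ⟨j1, hj1⟩ := hAS.nonempty
  obtain ⟨i1, hi1S, _, _⟩ := hwit j1 hj1
  have hSne : S.Nonempty := ⟨i1, hi1S⟩
  -- every element of Aset w \ S is > S.min'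
  have hlow : ∀ j ∈ Aset w \ ↑S, S.min' hSne ≤ j := by
    intro j hj
    obtain ⟨i, hiS, hij, _⟩ := hwit j hj
    exact le_of_lt (lt_of_le_of_lt (S.min'_le i hiS) hij)
  -- hence Aset w \ S is unbounded above
  have hup : ∀ m : ℤ, ∃ j ∈ Aset w \ ↑S, m < j :=
    unbdd_above_of_infinite_bddBelow hAS hlow
  obtain ⟨j, hj, hjgt⟩ := hup (S.max' hSne)
  obtain ⟨i, hi⟩ := hBS.nonempty
  -- i ∈ Bset w \ S has an ∧-witness, which must be in S, so i < S.max' < j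
  have hwitB : ∃ j' ∈ S, i < j' ∧ j' ∈ uset w := by
    obtain ⟨⟨hid, j', hij', hj'u⟩, hiS⟩ := hi
    by_cases hj'S : j' ∈ S
    · exact ⟨j', hj'S, hij', hj'u⟩
    · exact absurd ⟨hid, hj'u⟩ (hS i j' hij' (by simpa using hiS) hj'S)
  obtain ⟨j', hj'S, hij', _⟩ := hwitB
  have hij : i < j := lt_trans (lt_of_lt_of_le hij' (S.le_max' j' hj'S)) hjgt
  exact hS i j hij (by simpa using hi.2) (by simpa using hj.2) ⟨hi.1.1, hj.1.1⟩

end Statement5Inversions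


section Statement5Underline

lemma exists_adjacent_inversion {w : Weight} {i j : ℤ} (hij : i < j)
    (hid : i ∈ dset w) (hju : j ∈ uset w) :
    ∃ i0 j0 : ℤ, i0 < j0 ∧ w.label i0 = some Label.down ∧ w.label j0 = some Label.up ∧
      ∀ k, i0 < k → k < j0 → w.label k ≠ some Label.down ∧ w.label k ≠ some Label.up := by
  classical
  obtain ⟨i0, ⟨hi0lt, hi0d⟩, hi0max⟩ :=
    Int.exists_greatest_of_bdd (P := fun x => x < j ∧ x ∈ dset w)
      ⟨j, fun z hz => le_of_lt hz.1⟩ ⟨i, hij, hid⟩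
  obtain ⟨j0, ⟨hj0gt, hj0u⟩, hj0min⟩ :=
    Int.exists_least_of_bdd (P := fun x => i0 < x ∧ x ∈ uset w)
      ⟨i0, fun z hz => le_of_lt hz.1⟩ ⟨j, hi0lt, hju⟩
  have hj0j : j0 ≤ j := hj0min j ⟨hi0lt, hju⟩
  refine ⟨i0, j0, hj0gt, hi0d, hj0u, ?_⟩
  intro k hk1 hk2
  constructor
  · intro hkd
    have : k ≤ i0 := hi0max k ⟨lt_of_lt_of_le hk2 hj0j, hkd⟩
    omega
  · intro hku
    have : j0 ≤ k := hj0min k ⟨hk1, hku⟩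
    omega

def relabel2 (w : Weight) (i0 j0 : ℤ) (hd : w.label i0 = some Label.down)
    (hu : w.label j0 = some Label.up) : Weight where
  label k := if k = i0 ∨ k = j0 then some Label.cross else w.label k
  consecutive := by
    intro a b c hab hbc ha hc
    have hs : ∀ k : ℤ,
        ((if k = i0 ∨ k = j0 then some Label.cross else w.label k) : Option Label).isSome =
          (w.label k).isSome := by
      intro k
      split
      · next hk => rcases hk with rfl | rfl <;> simp [hd, hu]
      · rfl
    simp only [hs] at ha hc ⊢
    exact w.consecutive a b c hab hbc ha hc
  tail := by
    obtain ⟨S, hS⟩ := w.tail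
    refine ⟨insert i0 (insert j0 S), ?_⟩
    intro i j hij hiS hjS
    simp only [Finset.mem_insert] at hiS hjS
    push_neg at hiS hjS
    have hi' : ¬(i = i0 ∨ i = j0) := by tauto
    have hj' : ¬(j = i0 ∨ j = j0) := by tauto
    simpa [hi', hj'] using hS i j hij hiS.2.2 hjS.2.2

lemma relabel2_label (w : Weight) (i0 j0 : ℤ) (hd : w.label i0 = some Label.down)
    (hu : w.label j0 = some Label.up) (k : ℤ) :
    (relabel2 w i0 j0 hd hu).label k =
      if k = i0 ∨ k = j0 then some Label.cross else w.label k := rfl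

lemma aset_relabel2_subset (w : Weight) (i0 j0 : ℤ) (hd : w.label i0 = some Label.down)
    (hu : w.label j0 = some Label.up) :
    Aset (relabel2 w i0 j0 hd hu) ⊆ Aset w \ {j0} := by
  rintro j ⟨hju, i, hij, hid⟩
  simp only [uset, dset, Set.mem_setOf_eq, relabel2_label] at hju hid
  split at hju
  · exact absurd hju (by simp)
  · split at hid
    · exact absurd hid (by simp)
    · next hj' _ =>
      push_neg at hj'
      exact ⟨⟨hju, i, hij, hid⟩, by simpa using hj'.2⟩

lemma bset_relabel2_subset (w : Weight) (i0 j0 : ℤ) (hd : w.label i0 = some Label.down)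
    (hu : w.label j0 = some Label.up) :
    Bset (relabel2 w i0 j0 hd hu) ⊆ Bset w \ {i0} := by
  rintro i ⟨hid, j, hij, hju⟩
  simp only [uset, dset, Set.mem_setOf_eq, relabel2_label] at hju hid
  split at hju
  · exact absurd hju (by simp)
  · split at hid
    · exact absurd hid (by simp)
    · next _ hi' =>
      push_neg at hi'
      exact ⟨⟨hid, j, hij, hju⟩, by simpa using hi'.1⟩

lemma lift_underline {w w' : Weight} {i0 j0 : ℤ} (hlt : i0 < j0)
    (hw' : ∀ k, w'.label k = if k = i0 ∨ k = j0 then some Label.cross else w.label k)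
    (hd : w.label i0 = some Label.down) (hu : w.label j0 = some Label.up)
    (hbet0 : ∀ k, i0 < k → k < j0 →
      w.label k ≠ some Label.down ∧ w.label k ≠ some Label.up)
    {c' : ArcDiagram} (h : IsUnderline w' c') : ∃ c : ArcDiagram, IsUnderline w c := by
  have hwi0 : w'.label i0 = some Label.cross := by rw [hw']; simp
  have hwj0 : w'.label j0 = some Label.cross := by rw [hw']; simp
  have hkey4 : ∀ k, k ≠ i0 → k ≠ j0 → w'.label k = w.label k := by
    intro k h1 h2; rw [hw']; simp [h1, h2]
  have hcupne : ∀ p ∈ c'.cups, p.1 ≠ i0 ∧ p.1 ≠ j0 ∧ p.2 ≠ i0 ∧ p.2 ≠ j0 := by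
    intro p hp
    have h1 : w'.label p.1 = some Label.down := h.cup_left hp
    have h2 : w'.label p.2 = some Label.up := h.cup_right hp
    refine ⟨?_, ?_, ?_, ?_⟩ <;> intro e
    · rw [e, hwi0] at h1; exact absurd h1 (by simp)
    · rw [e, hwj0] at h1; exact absurd h1 (by simp)
    · rw [e, hwi0] at h2; exact absurd h2 (by simp)
    · rw [e, hwj0] at h2; exact absurd h2 (by simp)
  have hraysne : i0 ∉ c'.rays ∧ j0 ∉ c'.rays := by
    constructor <;> intro hr
    · rcases h.1.2.2.2.1 i0 hr with h1 | h1 <;> rw [hwi0] at h1 <;> exact absurd h1 (by simp)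
    · rcases h.1.2.2.2.1 j0 hr with h1 | h1 <;> rw [hwj0] at h1 <;> exact absurd h1 (by simp)
  have hbet : ∀ k, i0 < k → k < j0 →
      k ∉ c'.rays ∧ ∀ p ∈ c'.cups, k ≠ p.1 ∧ k ≠ p.2 := by
    intro k hk1 hk2
    have hk4 : w'.label k = w.label k :=
      hkey4 k (by omega) (by omega)
    have hkl := hbet0 k hk1 hk2
    constructor
    · intro hr
      rcases h.1.2.2.2.1 k hr with h1 | h1 <;> rw [hk4] at h1
      · exact hkl.1 h1
      · exact hkl.2 h1
    · intro p hp
      constructor <;> intro e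
      · have := h.cup_left hp; rw [← e, hk4] at this; exact hkl.1 this
      · have := h.cup_right hp; rw [← e, hk4] at this; exact hkl.2 this
  have hsupp2 : w'.support = w.support := by
    ext k
    show (w'.label k).isSome ↔ (w.label k).isSome
    rw [hw']
    split
    · next hk => rcases hk with rfl | rfl <;> simp [hd, hu]
    · rfl
  have hi0supp : i0 ∈ c'.support := by
    rw [h.1.1, hsupp2]
    show (w.label i0).isSome
    simp [hd]
  have hj0supp : j0 ∈ c'.support := by
    rw [h.1.1, hsupp2]
    show (w.label j0).isSome
    simp [hu]
  refine ⟨{ support := c'.support, consecutive := c'.consecutive,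
            cups := insert (i0, j0) c'.cups, rays := c'.rays,
            cups_finite := c'.cups_finite.insert _,
            cups_lt := ?_, cups_subset := ?_, rays_subset := c'.rays_subset,
            cups_disjoint := ?_, rays_cups_disjoint := ?_,
            cups_noncrossing := ?_, rays_cups_noncrossing := ?_ }, ?_, ?_⟩
  · rintro p hp
    rcases Set.mem_insert_iff.1 hp with rfl | hp
    · exact hlt
    · exact c'.cups_lt p hp
  · rintro p hp
    rcases Set.mem_insert_iff.1 hp with rfl | hp
    · exact ⟨hi0supp, hj0supp⟩
    · exact c'.cups_subset p hp
  · rintro p hp q hq hne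
    rcases Set.mem_insert_iff.1 hp with rfl | hp <;> rcases Set.mem_insert_iff.1 hq with rfl | hq
    · exact absurd rfl hne
    · exact ⟨((hcupne q hq).1).symm, ((hcupne q hq).2.2.1).symm,
        ((hcupne q hq).2.1).symm, ((hcupne q hq).2.2.2).symm⟩
    · exact ⟨(hcupne p hp).1, (hcupne p hp).2.1, (hcupne p hp).2.2.1, (hcupne p hp).2.2.2⟩
    · exact c'.cups_disjoint p hp q hq hne
  · rintro p hp r hr
    rcases Set.mem_insert_iff.1 hp with rfl | hp
    · exact ⟨fun e => hraysne.1 ((show i0 = r from e.symm) ▸ hr),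
        fun e => hraysne.2 ((show j0 = r from e.symm) ▸ hr)⟩
    · exact c'.rays_cups_disjoint p hp r hr
  · rintro p hp q hq h1 h2
    rcases Set.mem_insert_iff.1 hp with rfl | hp <;> rcases Set.mem_insert_iff.1 hq with rfl | hq
    · exact absurd h1 (lt_irrefl _)
    · exact absurd rfl (((hbet q.1 h1 h2).2 q hq).1)
    · -- p old, q = (i0,j0): p.1 < i0 < p.2, goal j0 < p.2
      rcases lt_trichotomy p.2 j0 with hc | hc | hc
      · exact absurd rfl (((hbet p.2 h2 hc).2 p hp).2)
      · exact absurd hc (hcupne p hp).2.2.2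
      · exact hc
    · exact c'.cups_noncrossing p hp q hq h1 h2
  · rintro p hp r hr ⟨h1, h2⟩
    rcases Set.mem_insert_iff.1 hp with rfl | hp
    · exact (hbet r h1 h2).1 hr
    · exact c'.rays_cups_noncrossing p hp r hr ⟨h1, h2⟩
  · -- OrientedCup c w
    refine ⟨h.1.1.trans hsupp2, ?_, ?_, ?_, ?_⟩
    · intro i hfr
      have hni0 : i ≠ i0 := fun e => absurd rfl (e ▸ (hfr.2.2 (i0, j0) (Set.mem_insert _ _)).1)
      have hnj0 : i ≠ j0 := fun e => absurd rfl (e ▸ (hfr.2.2 (i0, j0) (Set.mem_insert _ _)).2)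
      have hfr' : c'.Free i :=
        ⟨hfr.1, hfr.2.1, fun p hp => hfr.2.2 p (Set.mem_insert_of_mem _ hp)⟩
      have := h.1.2.1 i hfr'
      rwa [hkey4 i hni0 hnj0] at this
    · rintro p hp
      rcases Set.mem_insert_iff.1 hp with rfl | hp
      · exact Or.inl ⟨hd, hu⟩
      · have := h.1.2.2.1 p hp
        obtain ⟨e1, e2, e3, e4⟩ := hcupne p hp
        rwa [hkey4 p.1 e1 e2, hkey4 p.2 e3 e4] at this
    · intro r hr
      have := h.1.2.2.2.1 r hr
      rwa [hkey4 r (fun e => hraysne.1 (e ▸ hr)) (fun e => hraysne.2 (e ▸ hr))] at this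
    · intro r hr t ht hrt
      have := h.1.2.2.2.2 r hr t ht hrt
      rwa [hkey4 r (fun e => hraysne.1 (e ▸ hr)) (fun e => hraysne.2 (e ▸ hr)),
        hkey4 t (fun e => hraysne.1 (e ▸ ht)) (fun e => hraysne.2 (e ▸ ht))] at this
  · -- all cups anticlockwise
    rintro p hp
    rcases Set.mem_insert_iff.1 hp with rfl | hp
    · exact hd
    · have := h.2 p hp
      rwa [hkey4 p.1 (hcupne p hp).1 (hcupne p hp).2.1] at this

lemma exists_underline_of_no_aset {w : Weight} (hA : Aset w = ∅) :
    ∃ c, IsUnderline w c := by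
  have hnoinv : ∀ i j : ℤ, i < j → w.label i = some Label.down →
      w.label j = some Label.up → False := by
    intro i j hij hi hj
    have : j ∈ Aset w := ⟨hj, i, hij, hi⟩
    simp [hA] at this
  refine ⟨{ support := w.support,
            consecutive := fun a b c hab hbc ha hc => w.consecutive a b c hab hbc ha hc,
            cups := ∅, rays := vset w,
            cups_finite := Set.finite_empty,
            cups_lt := by simp, cups_subset := by simp,
            rays_subset := vset_subset_support w,
            cups_disjoint := by simp, rays_cups_disjoint := by simp,
            cups_noncrossing := by simp, rays_cups_noncrossing := by simp }, ?_, by simp⟩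
  refine ⟨rfl, ?_, by simp, ?_, ?_⟩
  · rintro i ⟨hi1, hi2, _⟩
    rcases label_cases w i with hc | hc | hc | hc | hc
    · exact absurd (show (w.label i).isSome from hi1) (by simp [hc])
    · exact Or.inl hc
    · exact Or.inr hc
    · exact absurd (Or.inl hc : i ∈ vset w) hi2
    · exact absurd (Or.inr hc : i ∈ vset w) hi2
  · rintro r (hr | hr)
    · exact Or.inl hr
    · exact Or.inr hr
  · rintro r hr t ht hrt ⟨h1, h2⟩
    exact hnoinv r t hrt h1 h2

lemma exists_underline_A : ∀ n : ℕ, ∀ w : Weight, (Aset w).Finite → (Aset w).ncard ≤ n →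
    ∃ c, IsUnderline w c := by
  intro n
  induction n with
  | zero =>
    intro w hf h0
    exact exists_underline_of_no_aset ((Set.ncard_eq_zero hf).1 (by omega))
  | succ n ih =>
    intro w hf hle
    by_cases hA : Aset w = ∅
    · exact exists_underline_of_no_aset hA
    · obtain ⟨j, hju, i, hij, hid⟩ := Set.nonempty_iff_ne_empty.2 hA
      obtain ⟨i0, j0, hlt, hi0, hj0, hbet⟩ := exists_adjacent_inversion hij hid hju
      have hj0A : j0 ∈ Aset w := ⟨hj0, i0, hlt, hi0⟩
      have hAsub := aset_relabel2_subset w i0 j0 hi0 hj0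
      have hf' : (Aset (relabel2 w i0 j0 hi0 hj0)).Finite :=
        hf.diff.subset hAsub
      have hcard : (Aset (relabel2 w i0 j0 hi0 hj0)).ncard ≤ n := by
        have h1 := Set.ncard_le_ncard hAsub hf.diff
        have h2 : (Aset w \ {j0}).ncard = (Aset w).ncard - 1 :=
          Set.ncard_diff_singleton_of_mem hj0A
        have h3 : 0 < (Aset w).ncard := (Set.ncard_pos hf).2 ⟨j0, hj0A⟩
        omega
      obtain ⟨c', hc'⟩ := ih (relabel2 w i0 j0 hi0 hj0) hf' hcard
      exact lift_underline hlt (relabel2_label w i0 j0 hi0 hj0) hi0 hj0 hbet hc'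

lemma exists_underline_B : ∀ n : ℕ, ∀ w : Weight, (Bset w).Finite → (Bset w).ncard ≤ n →
    ∃ c, IsUnderline w c := by
  intro n
  induction n with
  | zero =>
    intro w hf h0
    have hB : Bset w = ∅ := (Set.ncard_eq_zero hf).1 (by omega)
    refine exists_underline_of_no_aset (Set.eq_empty_iff_forall_notMem.2 ?_)
    rintro j ⟨hju, i, hij, hid⟩
    have : i ∈ Bset w := ⟨hid, j, hij, hju⟩
    simp [hB] at this
  | succ n ih =>
    intro w hf hle
    by_cases hB : Bset w = ∅
    · refine exists_underline_of_no_aset (Set.eq_empty_iff_forall_notMem.2 ?_)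
      rintro j ⟨hju, i, hij, hid⟩
      have : i ∈ Bset w := ⟨hid, j, hij, hju⟩
      simp [hB] at this
    · obtain ⟨i, hid, j, hij, hju⟩ := Set.nonempty_iff_ne_empty.2 hB
      obtain ⟨i0, j0, hlt, hi0, hj0, hbet⟩ := exists_adjacent_inversion hij hid hju
      have hi0B : i0 ∈ Bset w := ⟨hi0, j0, hlt, hj0⟩
      have hBsub := bset_relabel2_subset w i0 j0 hi0 hj0
      have hf' : (Bset (relabel2 w i0 j0 hi0 hj0)).Finite :=
        hf.diff.subset hBsub
      have hcard : (Bset (relabel2 w i0 j0 hi0 hj0)).ncard ≤ n := by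
        have h1 := Set.ncard_le_ncard hBsub hf.diff
        have h2 : (Bset w \ {i0}).ncard = (Bset w).ncard - 1 :=
          Set.ncard_diff_singleton_of_mem hi0B
        have h3 : 0 < (Bset w).ncard := (Set.ncard_pos hf).2 ⟨i0, hi0B⟩
        omega
      obtain ⟨c', hc'⟩ := ih (relabel2 w i0 j0 hi0 hj0) hf' hcard
      exact lift_underline hlt (relabel2_label w i0 j0 hi0 hj0) hi0 hj0 hbet hc'

lemma exists_underline (w : Weight) : ∃ c, IsUnderline w c := by
  rcases aset_or_bset_finite w with hf | hf
  · exact exists_underline_A (Aset w).ncard w hf le_rfl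
  · exact exists_underline_B (Bset w).ncard w hf le_rfl

end Statement5Underline


section Statement5AD

lemma block_sim {Λ : Set Weight} (hΛ : IsBlock Λ) {v w : Weight} (hv : v ∈ Λ) (hw : w ∈ Λ) :
    Sim v w := by
  obtain ⟨w0, rfl⟩ := hΛ
  exact (Sim.symm' hv).trans' hw

lemma bound_of_min_finite {Λ : Set Weight} (hΛ : IsBlock Λ) {v : Weight} (hv : v ∈ Λ)
    (hfin : (uset v).Finite ∨ (dset v).Finite) :
    ∃ N : ℕ, ∀ w ∈ Λ, ∀ c : ArcDiagram, IsUnderline w c → c.cups.ncard ≤ N := by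
  rcases hfin with hfin | hfin
  · refine ⟨(uset v).ncard, fun w hw c hc => ?_⟩
    obtain ⟨e⟩ := (block_sim hΛ hw hv).uset_equiv
    obtain ⟨hwf, hwcard⟩ := finite_ncard_of_equiv e hfin
    exact (hc.cups_ncard_le_uset hwf).trans (le_of_eq hwcard)
  · refine ⟨(dset v).ncard, fun w hw c hc => ?_⟩
    obtain ⟨e⟩ := (block_sim hΛ hw hv).dset_equiv
    obtain ⟨hwf, hwcard⟩ := finite_ncard_of_equiv e hfin
    exact (hc.cups_ncard_le_dset hwf).trans (le_of_eq hwcard)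

lemma subw_infinite_of_both_infinite {v : Weight} (hd : (dset v).Infinite)
    (hu : (uset v).Infinite) : {w : Weight | SubW w v}.Infinite := by
  classical
  obtain ⟨c0, hc0⟩ := exists_underline v
  have hocv : OrientedCup c0 v := hc0.1
  have hEfin := endset_finite c0
  -- cup endpoints are never rays
  have hEray : ∀ r ∈ c0.rays, r ∉ endset c0 := by
    intro r hr hE
    obtain ⟨p, hp, hor⟩ := mem_endset.1 hE
    obtain ⟨h1, h2⟩ := c0.rays_cups_disjoint p hp r hr
    rcases hor with e | e
    · exact h1 e
    · exact h2 e
  -- up-rays and down-rays are infinite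
  have hUR : (uset v ∩ c0.rays).Infinite := by
    refine (hu.diff hEfin).mono ?_
    rintro k ⟨hk, hkE⟩
    rcases mem_rays_or_endset hocv (Or.inr hk) with h | h
    · exact ⟨hk, h⟩
    · exact absurd h hkE
  have hDR : (dset v ∩ c0.rays).Infinite := by
    refine (hd.diff hEfin).mono ?_
    rintro k ⟨hk, hkE⟩
    rcases mem_rays_or_endset hocv (Or.inl hk) with h | h
    · exact ⟨hk, h⟩
    · exact absurd h hkE
  obtain ⟨d0, hd0⟩ := hDR.nonempty
  have hURbdd : ∀ u ∈ uset v ∩ c0.rays, u ≤ d0 := by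
    intro u hu'
    by_contra hgt
    push_neg at hgt
    exact hocv.2.2.2.2 d0 hd0.2 u hu'.2 hgt ⟨hd0.1, hu'.1⟩
  have hURunb : ∀ m : ℤ, ∃ x ∈ uset v ∩ c0.rays, x < m :=
    unbdd_below_of_infinite_bddAbove hUR hURbdd
  obtain ⟨u0, hu0⟩ := hUR.nonempty
  have hDRbdd : ∀ e ∈ dset v ∩ c0.rays, u0 ≤ e := by
    intro e he
    by_contra hlt
    push_neg at hlt
    exact hocv.2.2.2.2 e he.2 u0 hu0.2 hlt ⟨he.1, hu0.1⟩
  have hDRunb : ∀ m : ℤ, ∃ x ∈ dset v ∩ c0.rays, m < x :=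
    unbdd_above_of_infinite_bddBelow hDR hDRbdd
  have hraysupp : ∀ r ∈ c0.rays, (v.label r).isSome := by
    intro r hr
    have h1 := c0.rays_subset hr
    rw [hocv.1] at h1
    exact h1
  have hraylab : ∀ r ∈ c0.rays, v.label r = some Label.down ∨ v.label r = some Label.up :=
    hocv.2.2.2.1
  -- construction of the weight w_t for a threshold t
  have hwt : ∀ t : ℤ, ∃ wt : Weight,
      (∀ k, wt.label k = if k ∈ c0.rays then
        (if k < t then some Label.up else some Label.down) else v.label k) ∧
      SubW wt v := by
    intro t
    have hsome : ∀ k : ℤ, ((if k ∈ c0.rays then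
        (if k < t then some Label.up else some Label.down) else v.label k) :
          Option Label).isSome = (v.label k).isSome := by
      intro k
      split
      · next hk => split <;> simp [hraysupp k hk]
      · rfl
    set lab : ℤ → Option Label := fun k => if k ∈ c0.rays then
      (if k < t then some Label.up else some Label.down) else v.label k with hlab
    have hlabup : ∀ k, lab k = some Label.up → (k ∈ c0.rays ∧ k < t) ∨
        (k ∉ c0.rays ∧ v.label k = some Label.up) := by
      intro k hk
      rw [hlab] at hk
      simp only at hk
      split at hk
      · next h1 =>
        split at hk
        · next h2 => exact Or.inl ⟨h1, h2⟩
        · exact absurd hk (by simp)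
      · next h1 => exact Or.inr ⟨h1, hk⟩
    have hlabdown : ∀ k, lab k = some Label.down → (k ∈ c0.rays ∧ t ≤ k) ∨
        (k ∉ c0.rays ∧ v.label k = some Label.down) := by
      intro k hk
      rw [hlab] at hk
      simp only at hk
      split at hk
      · next h1 =>
        split at hk
        · exact absurd hk (by simp)
        · next h2 => exact Or.inl ⟨h1, by omega⟩
      · next h1 => exact Or.inr ⟨h1, hk⟩
    refine ⟨⟨lab, ?_, ?_⟩, fun k => rfl, ?_⟩
    · intro a b c hab hbc ha hc
      have ha' : (v.label a).isSome := by rw [← hsome a]; exact ha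
      have hc' : (v.label c).isSome := by rw [← hsome c]; exact hc
      show (lab b).isSome
      rw [show lab b = _ from rfl, hsome b]
      exact v.consecutive a b c hab hbc ha' hc'
    · -- tail
      refine ⟨hEfin.toFinset, ?_⟩
      intro i j hij hiS hjS
      rintro ⟨h1, h2⟩
      rw [Set.Finite.mem_toFinset] at hiS hjS
      rcases hlabdown i h1 with ⟨hiR, hti⟩ | ⟨hiR, hiv⟩
      · rcases hlabup j h2 with ⟨hjR, hjt⟩ | ⟨hjR, hjv⟩
        · omega
        · rcases mem_rays_or_endset hocv (Or.inr hjv) with h | h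
          · exact hjR h
          · exact hjS h
      · rcases mem_rays_or_endset hocv (Or.inl hiv) with h | h
        · exact hiR h
        · exact hiS h
    · -- SubW wt v
      set wt : Weight := ⟨lab, _, _⟩
      have hwtlab : ∀ k, wt.label k = lab k := fun k => rfl
      have hsupp : wt.support = v.support := by
        ext k
        show (wt.label k).isSome ↔ (v.label k).isSome
        rw [hwtlab, show lab k = _ from rfl, hsome k]
      refine ⟨⟨?_, ?_, ?_, ?_, ?_⟩, c0, ⟨⟨?_, ?_, ?_, ?_, ?_⟩, ?_⟩, hocv⟩
      · intro k
        rw [hwtlab, show (lab k).isSome = (v.label k).isSome from hsome k]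
      · intro k
        rw [hwtlab, hlab]
        simp only
        split
        · next hk =>
          constructor
          · intro hh; split at hh <;> exact absurd hh (by simp)
          · intro hh
            rcases hraylab k hk with h | h <;> rw [hh] at h <;> exact absurd h (by simp)
        · exact Iff.rfl
      · intro k
        rw [hwtlab, hlab]
        simp only
        split
        · next hk =>
          constructor
          · intro hh; split at hh <;> exact absurd hh (by simp)
          · intro hh
            rcases hraylab k hk with h | h <;> rw [hh] at h <;> exact absurd h (by simp)
        · exact Iff.rfl
      · -- dset equiv
        refine equiv_of_infinite ?_ hd
        refine (tail_infinite_of_unbdd_above hDRunb t).mono ?_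
        rintro x ⟨⟨hxd, hxR⟩, hxt⟩
        show lab x = some Label.down
        rw [hlab]
        simp only
        rw [if_pos hxR, if_neg (by simp at hxt; omega)]
      · -- uset equiv
        refine equiv_of_infinite ?_ hu
        refine (tail_infinite_of_unbdd_below hURunb t).mono ?_
        rintro x ⟨⟨hxu, hxR⟩, hxt⟩
        show lab x = some Label.up
        rw [hlab]
        simp only
        rw [if_pos hxR, if_pos (by simpa using hxt)]
      -- IsUnderline wt c0
      · rw [hsupp]; exact hocv.1
      · intro k hfree
        have hkR : k ∉ c0.rays := hfree.2.1
        rw [hwtlab, hlab]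
        simp only
        rw [if_neg hkR]
        exact hc0.1.2.1 k hfree
      · intro p hp
        have h1 : p.1 ∉ c0.rays := fun hr => (c0.rays_cups_disjoint p hp p.1 hr).1 rfl
        have h2 : p.2 ∉ c0.rays := fun hr => (c0.rays_cups_disjoint p hp p.2 hr).2 rfl
        rw [hwtlab, hwtlab, hlab]
        simp only
        rw [if_neg h1, if_neg h2]
        exact hc0.1.2.2.1 p hp
      · intro r hr
        rw [hwtlab, hlab]
        simp only
        rw [if_pos hr]
        split
        · exact Or.inr rfl
        · exact Or.inl rfl
      · intro r hr s hs hrs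
        rintro ⟨h1, h2⟩
        rcases hlabdown r h1 with ⟨_, htr⟩ | ⟨hrR, _⟩
        · rcases hlabup s h2 with ⟨_, hst⟩ | ⟨hsR, _⟩
          · omega
          · exact hsR hs
        · exact hrR hr
      · intro p hp
        have h1 : p.1 ∉ c0.rays := fun hrr => (c0.rays_cups_disjoint p hp p.1 hrr).1 rfl
        rw [hwtlab, hlab]
        simp only
        rw [if_neg h1]
        exact hc0.2 p hp
  -- now extract infinitely many distinct weights
  choose wt hwtlab hwtmem using hwt
  have hinj : Set.InjOn wt (uset v ∩ c0.rays) := by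
    intro a ha b hb hab
    by_contra hne
    rcases lt_trichotomy a b with hlt | heq | hgt
    · have e1 : (wt a).label a = some Label.down := by
        rw [hwtlab a a, if_pos ha.2, if_neg (lt_irrefl a)]
      have e2 : (wt b).label a = some Label.up := by
        rw [hwtlab b a, if_pos ha.2, if_pos hlt]
      rw [hab] at e1
      rw [e1] at e2
      exact absurd e2 (by simp)
    · exact hne heq
    · have e1 : (wt b).label b = some Label.down := by
        rw [hwtlab b b, if_pos hb.2, if_neg (lt_irrefl b)]
      have e2 : (wt a).label b = some Label.up := by
        rw [hwtlab a b, if_pos hb.2, if_pos hgt]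
      rw [hab] at e2
      rw [e1] at e2
      exact absurd e2 (by simp)
  have hmaps : Set.MapsTo wt (uset v ∩ c0.rays) {w : Weight | SubW w v} := by
    intro a _
    exact hwtmem a
  exact ((hUR.image hinj).mono hmaps.image_subset)

end Statement5AD


section Statement5B

lemma dset_unbdd_above {v : Weight} (hd : (dset v).Infinite) (hu : (uset v).Infinite) :
    ∀ m : ℤ, ∃ x ∈ dset v, m < x := by
  obtain ⟨S, hS⟩ := v.tail
  have hdS : (dset v \ ↑S).Infinite := hd.diff S.finite_toSet
  have huS : (uset v \ ↑S).Infinite := hu.diff S.finite_toSet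
  obtain ⟨u0, hu0⟩ := huS.nonempty
  have hbdd : ∀ x ∈ dset v \ ↑S, u0 ≤ x := by
    intro x hx
    by_contra h
    push_neg at h
    exact hS x u0 h (by simpa using hx.2) (by simpa using hu0.2) ⟨hx.1, hu0.1⟩
  intro m
  obtain ⟨x, hx, hxm⟩ := unbdd_above_of_infinite_bddBelow hdS hbdd m
  exact ⟨x, hx.1, hxm⟩

lemma uset_unbdd_below {v : Weight} (hd : (dset v).Infinite) (hu : (uset v).Infinite) :
    ∀ m : ℤ, ∃ x ∈ uset v, x < m := by
  obtain ⟨S, hS⟩ := v.tail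
  have hdS : (dset v \ ↑S).Infinite := hd.diff S.finite_toSet
  have huS : (uset v \ ↑S).Infinite := hu.diff S.finite_toSet
  obtain ⟨d0, hd0⟩ := hdS.nonempty
  have hbdd : ∀ x ∈ uset v \ ↑S, x ≤ d0 := by
    intro x hx
    by_contra h
    push_neg at h
    exact hS d0 x h (by simpa using hd0.2) (by simpa using hx.2) ⟨hd0.1, hx.1⟩
  intro m
  obtain ⟨x, hx, hxm⟩ := unbdd_below_of_infinite_bddAbove huS hbdd m
  exact ⟨x, hx.1, hxm⟩

lemma exists_enum (P : Set ℤ) (hP : ∀ m : ℤ, ∃ x ∈ P, m < x) :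
    ∃ f : ℕ → ℤ, (∀ n, f n ∈ P) ∧ StrictMono f ∧ (∀ y ∈ P, 0 < y → f 0 ≤ y) ∧
      (∀ n, ∀ y ∈ P, f n < y → f (n + 1) ≤ y) := by
  classical
  have h : ∀ m : ℤ, ∃ x, (x ∈ P ∧ m < x) ∧ ∀ y, (y ∈ P ∧ m < y) → x ≤ y := by
    intro m
    refine Int.exists_least_of_bdd ⟨m, fun z hz => le_of_lt hz.2⟩ ?_
    obtain ⟨x, h1, h2⟩ := hP m
    exact ⟨x, h1, h2⟩
  set g : ℤ → ℤ := fun m => Classical.choose (h m) with hg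
  have hspec : ∀ m, (g m ∈ P ∧ m < g m) ∧ ∀ y, (y ∈ P ∧ m < y) → g m ≤ y :=
    fun m => Classical.choose_spec (h m)
  set f : ℕ → ℤ := fun n => Nat.rec (g 0) (fun _ ih => g ih) n with hf
  have hfsucc : ∀ n, f (n + 1) = g (f n) := fun n => rfl
  have hmem : ∀ n, f n ∈ P := by
    intro n
    induction n with
    | zero => exact (hspec 0).1.1
    | succ n _ => rw [hfsucc]; exact (hspec (f n)).1.1
  have hmono : StrictMono f := by
    apply strictMono_nat_of_lt_succ
    intro n
    rw [hfsucc]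
    exact (hspec (f n)).1.2
  refine ⟨f, hmem, hmono, ?_, ?_⟩
  · intro y hy hy0
    exact (hspec 0).2 y ⟨hy, hy0⟩
  · intro n y hy hny
    rw [hfsucc]
    exact (hspec (f n)).2 y ⟨hy, hny⟩

lemma no_bound_of_both_infinite {v : Weight} (hd : (dset v).Infinite)
    (hu : (uset v).Infinite) (N : ℕ) :
    ∃ w : Weight, Sim v w ∧ ∃ c : ArcDiagram, IsUnderline w c ∧ N < c.cups.ncard := by
  classical
  set P := vset v with hP
  have hPa : ∀ m : ℤ, ∃ x ∈ P, m < x := by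
    intro m
    obtain ⟨x, hx, hxm⟩ := dset_unbdd_above hd hu m
    exact ⟨x, Or.inl hx, hxm⟩
  obtain ⟨f, hfP, hfmono, hf0min, hfmin⟩ := exists_enum P hPa
  set K := N + 1 with hK
  set U : Set ℤ := (P ∩ Set.Iio (f 0)) ∪ (fun t => f (2 * t + 1)) '' {t : ℕ | t < K}
    with hU
  have hUP : U ⊆ P := by
    rintro k (hk | ⟨t, _, rfl⟩)
    · exact hk.1
    · exact hfP _
  have hPsome : ∀ k ∈ P, (v.label k).isSome := fun k hk => (mem_vset_iff.1 hk).1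
  set lab : ℤ → Option Label := fun k =>
    if k ∈ P then (if k ∈ U then some Label.up else some Label.down) else v.label k
    with hlabd
  have hsome : ∀ k : ℤ, (lab k).isSome = (v.label k).isSome := by
    intro k
    rw [hlabd]
    simp only
    split
    · next hk => split <;> simp [hPsome k hk]
    · rfl
  have hlabdown : ∀ k, lab k = some Label.down ↔ (k ∈ P ∧ k ∉ U) := by
    intro k
    rw [hlabd]
    simp only
    constructor
    · intro hk
      split at hk
      · next h1 =>
        split at hk
        · exact absurd hk (by simp)
        · next h2 => exact ⟨h1, h2⟩
      · next h1 =>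
        exact absurd (Or.inl hk : k ∈ vset v) h1
    · rintro ⟨h1, h2⟩
      rw [if_pos h1, if_neg h2]
  have hlabup : ∀ k, lab k = some Label.up ↔ k ∈ U := by
    intro k
    rw [hlabd]
    simp only
    constructor
    · intro hk
      split at hk
      · next h1 =>
        split at hk
        · next h2 => exact h2
        · exact absurd hk (by simp)
      · next h1 =>
        exact absurd (Or.inr hk : k ∈ vset v) h1
    · intro h2
      rw [if_pos (hUP h2), if_pos h2]
  have hnotU : ∀ k ∈ P, k ∉ U → f 0 ≤ k := by
    intro k hk hkU
    by_contra hlt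
    push_neg at hlt
    exact hkU (Or.inl ⟨hk, hlt⟩)
  -- the weight w
  refine ⟨⟨lab, ?_, ?_⟩, ?_, ?_⟩
  · intro a b c hab hbc ha hc
    have ha' : (v.label a).isSome := by rw [← hsome a]; exact ha
    have hc' : (v.label c).isSome := by rw [← hsome c]; exact hc
    show (lab b).isSome
    rw [hsome b]
    exact v.consecutive a b c hab hbc ha' hc'
  · -- tail
    refine ⟨(Finset.range (2 * K)).image f, ?_⟩
    intro i j hij hiS hjS
    rintro ⟨h1, h2⟩
    obtain ⟨hiP, hiU⟩ := (hlabdown i).1 h1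
    have hjU := (hlabup j).1 h2
    have hjlt : j < f 0 := by
      rcases hjU with hj | ⟨t, ht, rfl⟩
      · exact hj.2
      · simp only [Set.mem_setOf_eq] at ht
        exact absurd (Finset.mem_image.2 ⟨2 * t + 1, Finset.mem_range.2 (by omega), rfl⟩) hjS
    have := hnotU i hiP hiU
    omega
  · -- Sim v w
    refine ⟨?_, ?_, ?_, ?_, ?_⟩
    · intro k
      show (v.label k).isSome ↔ (lab k).isSome
      rw [hsome k]
    · intro k
      show _ ↔ lab k = some Label.nought
      rw [hlabd]
      simp only
      split
      · next hk =>
        constructor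
        · intro hh
          exfalso
          rcases hk with h | h <;> simp only [dset, uset, Set.mem_setOf_eq] at h <;>
            rw [hh] at h <;> exact absurd h (by simp)
        · intro hh
          split at hh <;> exact absurd hh (by simp)
      · exact Iff.rfl
    · intro k
      show _ ↔ lab k = some Label.cross
      rw [hlabd]
      simp only
      split
      · next hk =>
        constructor
        · intro hh
          exfalso
          rcases hk with h | h <;> simp only [dset, uset, Set.mem_setOf_eq] at h <;>
            rw [hh] at h <;> exact absurd h (by simp)
        · intro hh
          split at hh <;> exact absurd hh (by simp)
      · exact Iff.rfl
    · -- dset equiv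
      refine Nonempty.map Equiv.symm (equiv_of_infinite ?_ hd)
      refine (tail_infinite_of_unbdd_above (dset_unbdd_above hd hu) (f (2 * K))).mono ?_
      rintro x ⟨hxd, hxgt⟩
      show lab x = some Label.down
      rw [hlabdown]
      refine ⟨Or.inl hxd, ?_⟩
      rintro (hx | ⟨t, ht, hxe⟩)
      · have h0 : f 0 ≤ f (2 * K) := hfmono.monotone (by omega)
        have h2 := hx.2
        simp only [Set.mem_Iio] at h2
        simp only [Set.mem_Ioi] at hxgt
        omega
      · simp only [Set.mem_setOf_eq] at ht
        have h1 : f (2 * t + 1) < f (2 * K) := hfmono (by omega)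
        have hxe' : f (2 * t + 1) = x := hxe
        simp only [Set.mem_Ioi] at hxgt
        omega
    · -- uset equiv
      refine Nonempty.map Equiv.symm (equiv_of_infinite ?_ hu)
      refine (tail_infinite_of_unbdd_below (uset_unbdd_below hd hu) (f 0)).mono ?_
      rintro x ⟨hxu, hxlt⟩
      show lab x = some Label.up
      rw [hlabup]
      exact Or.inl ⟨Or.inr hxu, by simpa using hxlt⟩
  · -- the diagram c
    have hcupinj : Set.InjOn (fun t : ℕ => (f (2 * t), f (2 * t + 1))) {t : ℕ | t < K} := by
      intro a _ b _ hab
      have := congrArg Prod.fst hab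
      simp only at this
      have := hfmono.injective this
      omega
    have hgap : ∀ (n : ℕ), ∀ y ∈ P, f n < y → y < f (n + 1) → False := by
      intro n y hy h1 h2
      have := hfmin n y hy h1
      omega
    refine ⟨{ support := v.support, consecutive := v.consecutive,
              cups := (fun t : ℕ => (f (2 * t), f (2 * t + 1))) '' {t : ℕ | t < K},
              rays := P \ (f '' {t : ℕ | t < 2 * K}),
              cups_finite := Set.Finite.image _ (Set.finite_Iio K),
              cups_lt := ?_, cups_subset := ?_, rays_subset := ?_,
              cups_disjoint := ?_, rays_cups_disjoint := ?_,
              cups_noncrossing := ?_, rays_cups_noncrossing := ?_ }, ⟨⟨?_, ?_, ?_, ?_, ?_⟩, ?_⟩, ?_⟩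
    · rintro p ⟨t, _, rfl⟩
      exact hfmono (by omega)
    · rintro p ⟨t, _, rfl⟩
      exact ⟨vset_subset_support v (hfP _), vset_subset_support v (hfP _)⟩
    · rintro r ⟨hr, _⟩
      exact vset_subset_support v hr
    · rintro p ⟨t, _, rfl⟩ q ⟨s, _, rfl⟩ hne
      have hts : t ≠ s := fun e => hne (by rw [e])
      refine ⟨?_, ?_, ?_, ?_⟩ <;> intro e <;> have := hfmono.injective e <;> omega
    · rintro p ⟨t, ht, rfl⟩ r ⟨_, hr⟩
      simp only [Set.mem_setOf_eq] at ht
      constructor <;> intro e <;> refine hr ?_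
      · exact ⟨2 * t, by simp only [Set.mem_setOf_eq]; omega, e.symm⟩
      · exact ⟨2 * t + 1, by simp only [Set.mem_setOf_eq]; omega, e.symm⟩
    · rintro p ⟨t, _, rfl⟩ q ⟨s, _, rfl⟩ h1 h2
      simp only at h1 h2
      rw [hfmono.lt_iff_lt] at h1 h2
      omega
    · rintro p ⟨t, _, rfl⟩ r ⟨hrP, _⟩ ⟨h1, h2⟩
      exact hgap (2 * t) r hrP h1 h2
    · -- support of c = support of w
      ext k
      show k ∈ v.support ↔ (lab k).isSome
      rw [hsome k]
      exact Iff.rfl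
    · -- free vertices
      rintro i ⟨hisupp, hiray, hicup⟩
      by_cases hiP : i ∈ P
      · exfalso
        have : i ∈ f '' {t : ℕ | t < 2 * K} := by
          by_contra hni
          exact hiray ⟨hiP, hni⟩
        obtain ⟨x, hx, rfl⟩ := this
        simp only [Set.mem_setOf_eq] at hx
        obtain ⟨t, ht | ht⟩ := Nat.even_or_odd' x
        · exact (hicup (f (2 * t), f (2 * t + 1)) ⟨t, by simp only [Set.mem_setOf_eq]; omega,
            rfl⟩).1 (by rw [ht])
        · exact (hicup (f (2 * t), f (2 * t + 1)) ⟨t, by simp only [Set.mem_setOf_eq]; omega,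
            rfl⟩).2 (by rw [ht])
      · have : lab i = v.label i := by
          rw [hlabd]; simp only; rw [if_neg hiP]
        rw [show (⟨lab, _, _⟩ : Weight).label = lab from rfl, this]
        rcases label_cases v i with hc | hc | hc | hc | hc
        · exfalso
          have h2 : (v.label i).isSome := hisupp
          rw [hc] at h2
          simp at h2
        · exact Or.inl hc
        · exact Or.inr hc
        · exact absurd (Or.inl hc : i ∈ vset v) hiP
        · exact absurd (Or.inr hc : i ∈ vset v) hiP
    · -- cups oriented
      rintro p ⟨t, ht, rfl⟩
      simp only [Set.mem_setOf_eq] at ht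
      refine Or.inl ⟨?_, ?_⟩
      · show lab _ = _
        rw [hlabdown]
        refine ⟨hfP _, ?_⟩
        rintro (hx | ⟨s, _, he⟩)
        · have := hx.2
          have h0 : f 0 ≤ f (2 * t) := hfmono.monotone (by omega)
          simp only [Set.mem_Iio] at this
          omega
        · have := hfmono.injective he
          omega
      · show lab _ = _
        rw [hlabup]
        exact Or.inr ⟨t, ht, rfl⟩
    · -- rays oriented
      rintro r ⟨hrP, _⟩
      show lab r = _ ∨ lab r = _
      rw [hlabd]
      simp only
      rw [if_pos hrP]
      split
      · exact Or.inr rfl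
      · exact Or.inl rfl
    · -- ray pairs
      rintro r ⟨hrP, hrI⟩ s ⟨hsP, hsI⟩ hrs ⟨h1, h2⟩
      have hr0 : f 0 ≤ r := hnotU r hrP (((hlabdown r).1 h1).2)
      have hsU := (hlabup s).1 h2
      have hs0 : s < f 0 := by
        rcases hsU with hx | ⟨u, hu, he⟩
        · exact hx.2
        · simp only [Set.mem_setOf_eq] at hu
          refine absurd (⟨2 * u + 1, ?_, ?_⟩ : s ∈ f '' {t : ℕ | t < 2 * K}) hsI
          · simp only [Set.mem_setOf_eq]; omega
          · simpa using he
      omega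
    · -- all cups anticlockwise
      rintro p ⟨t, ht, rfl⟩
      simp only [Set.mem_setOf_eq] at ht
      show lab _ = _
      rw [hlabdown]
      refine ⟨hfP _, ?_⟩
      rintro (hx | ⟨s, _, he⟩)
      · have := hx.2
        have h0 : f 0 ≤ f (2 * t) := hfmono.monotone (by omega)
        simp only [Set.mem_Iio] at this
        omega
      · have := hfmono.injective he
        omega
    · -- count the cups
      have : ((fun t : ℕ => (f (2 * t), f (2 * t + 1))) '' {t : ℕ | t < K}).ncard = K := by
        rw [Set.ncard_image_of_injOn hcupinj]
        show (Set.Iio K).ncard = K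
        rw [← Finset.coe_range, Set.ncard_coe_finset, Finset.card_range]
      show N < ((fun t : ℕ => (f (2 * t), f (2 * t + 1))) '' {t : ℕ | t < K}).ncard
      omega
end Statement5B


section Statement5C

lemma eq_of_sim_of_uset_eq {v w1 w2 : Weight} (h1 : Sim w1 v) (h2 : Sim w2 v)
    (he : uset w1 = uset w2) : w1 = w2 := by
  apply Weight.ext'
  funext k
  rcases label_cases v k with hc | hc | hc | hc | hc
  · have e1 : ¬(w1.label k).isSome := by rw [h1.1 k, hc]; simp
    have e2 : ¬(w2.label k).isSome := by rw [h2.1 k, hc]; simp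
    rw [Option.not_isSome_iff_eq_none] at e1 e2
    rw [e1, e2]
  · rw [(h1.2.1 k).2 hc, (h2.2.1 k).2 hc]
  · rw [(h1.2.2.1 k).2 hc, (h2.2.2.1 k).2 hc]
  all_goals {
    have hk : k ∈ vset v := by
      first
      | exact Or.inl hc
      | exact Or.inr hc
    have hk1 : k ∈ vset w1 := by rw [Sim.vset_eq h1]; exact hk
    have hk2 : k ∈ vset w2 := by rw [Sim.vset_eq h2]; exact hk
    by_cases hu : k ∈ uset w1
    · have hu2 : k ∈ uset w2 := he ▸ hu
      rw [show w1.label k = some Label.up from hu, show w2.label k = some Label.up from hu2]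
    · have hd1 : w1.label k = some Label.down := by
        rcases hk1 with h | h
        · exact h
        · exact absurd h hu
      have hd2 : w2.label k = some Label.down := by
        rcases hk2 with h | h
        · exact h
        · exact absurd (show k ∈ uset w1 from he.symm ▸ h) hu
      rw [hd1, hd2] }

lemma eq_of_sim_of_dset_eq {v w1 w2 : Weight} (h1 : Sim w1 v) (h2 : Sim w2 v)
    (he : dset w1 = dset w2) : w1 = w2 := by
  apply Weight.ext'
  funext k
  rcases label_cases v k with hc | hc | hc | hc | hc
  · have e1 : ¬(w1.label k).isSome := by rw [h1.1 k, hc]; simp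
    have e2 : ¬(w2.label k).isSome := by rw [h2.1 k, hc]; simp
    rw [Option.not_isSome_iff_eq_none] at e1 e2
    rw [e1, e2]
  · rw [(h1.2.1 k).2 hc, (h2.2.1 k).2 hc]
  · rw [(h1.2.2.1 k).2 hc, (h2.2.2.1 k).2 hc]
  all_goals {
    have hk : k ∈ vset v := by
      first
      | exact Or.inl hc
      | exact Or.inr hc
    have hk1 : k ∈ vset w1 := by rw [Sim.vset_eq h1]; exact hk
    have hk2 : k ∈ vset w2 := by rw [Sim.vset_eq h2]; exact hk
    by_cases hu : k ∈ dset w1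
    · have hu2 : k ∈ dset w2 := he ▸ hu
      rw [show w1.label k = some Label.down from hu, show w2.label k = some Label.down from hu2]
    · have hd1 : w1.label k = some Label.up := by
        rcases hk1 with h | h
        · exact absurd h hu
        · exact h
      have hd2 : w2.label k = some Label.up := by
        rcases hk2 with h | h
        · exact absurd (show k ∈ dset w1 from he.symm ▸ h) hu
        · exact h
      rw [hd1, hd2] }

lemma subw_finite_of_uset_finite {v : Weight} (hfin : (uset v).Finite) :
    {w : Weight | SubW w v}.Finite := by
  classical
  set n := (uset v).ncard with hn
  set P := vset v with hP
  set F2 : Set ℤ :=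
    {j | j ∈ P ∧ (P ∩ Set.Iio j).Finite ∧ (P ∩ Set.Iio j).ncard ≤ 3 * n} with hF2
  set F3 : Set ℤ := ⋃ q ∈ uset v,
    {j | j ∈ P ∧ q < j ∧ (P ∩ Set.Ioo q j).Finite ∧ (P ∩ Set.Ioo q j).ncard ≤ 2 * n} with hF3
  set F : Set ℤ := (uset v ∪ F2) ∪ F3 with hF
  have hFfin : F.Finite := by
    refine (hfin.union ?_).union ?_
    · apply finite_of_small_left (n := 3 * n)
      intro j hj
      have hsub : F2 ∩ Set.Iio j ⊆ P ∩ Set.Iio j := fun x hx => ⟨hx.1.1, hx.2⟩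
      exact ⟨hj.2.1.subset hsub, le_trans (Set.ncard_le_ncard hsub hj.2.1) hj.2.2⟩
    · refine Set.Finite.biUnion hfin ?_
      intro q _
      apply finite_of_small_left (n := 2 * n)
      intro j hj
      have hsub : {j | j ∈ P ∧ q < j ∧ (P ∩ Set.Ioo q j).Finite ∧
          (P ∩ Set.Ioo q j).ncard ≤ 2 * n} ∩ Set.Iio j ⊆ P ∩ Set.Ioo q j :=
        fun x hx => ⟨hx.1.1, hx.1.2.1, hx.2⟩
      exact ⟨hj.2.2.1.subset hsub, le_trans (Set.ncard_le_ncard hsub hj.2.2.1) hj.2.2.2⟩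
  have hkey : ∀ w ∈ {w : Weight | SubW w v}, uset w ⊆ F := by
    rintro w ⟨hsim, c, hund, hocv⟩
    have hPw : vset w = P := Sim.vset_eq hsim
    obtain ⟨e⟩ := hsim.uset_equiv
    obtain ⟨husetfin, husetcard⟩ := finite_ncard_of_equiv e hfin
    have hcupsn : c.cups.ncard ≤ n := by
      rw [hn, ← husetcard]
      exact hund.cups_ncard_le_uset husetfin
    have hocw := hund.1
    have hEfin := endset_finite c
    have hEcard : (endset c).ncard ≤ 2 * n := le_trans (endset_ncard_le c) (by omega)
    intro j hj
    have hjvw : j ∈ vset w := Or.inr hj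
    have hjP : j ∈ P := by rw [← hPw]; exact hjvw
    rcases mem_rays_or_endset hocw hjvw with hray | hcup
    · -- ray case
      have hrays_up : c.rays ∩ Set.Iio j ⊆ uset w := by
        rintro r ⟨hr, hrj⟩
        simp only [Set.mem_Iio] at hrj
        have hnp := hocw.2.2.2.2 r hr j hray hrj
        rcases hocw.2.2.2.1 r hr with h | h
        · exact absurd ⟨h, hj⟩ hnp
        · exact h
      have hsub : P ∩ Set.Iio j ⊆ uset w ∪ endset c := by
        rintro x ⟨hxP, hxj⟩
        rcases mem_rays_or_endset hocw (show x ∈ vset w by rw [hPw]; exact hxP) with h | h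
        · exact Or.inl (hrays_up ⟨h, hxj⟩)
        · exact Or.inr h
      have hfin2 : (P ∩ Set.Iio j).Finite := (husetfin.union hEfin).subset hsub
      have hcard2 : (P ∩ Set.Iio j).ncard ≤ 3 * n := by
        have ha1 := Set.ncard_le_ncard hsub (husetfin.union hEfin)
        have ha2 := Set.ncard_union_le (uset w) (endset c)
        omega
      exact Or.inl (Or.inr ⟨hjP, hfin2, hcard2⟩)
    · -- cup case
      obtain ⟨p, hp, hjor⟩ := mem_endset.1 hcup
      have hj2 : j = p.2 := by
        rcases hjor with h | h
        · exfalso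
          have hL := hund.cup_left hp
          rw [← h, show w.label j = some Label.up from hj] at hL
          simp at hL
        · exact h
      have hij : p.1 < j := hj2 ▸ c.cups_lt p hp
      rcases hocv.2.2.1 p hp with ⟨hv1, hv2⟩ | ⟨hv1, hv2⟩
      · -- v p.2 = up, so j ∈ uset v
        exact Or.inl (Or.inl (show j ∈ uset v by rw [hj2]; exact hv2))
      · -- v p.1 = up: j belongs to F3
        have hq : p.1 ∈ uset v := hv1
        have hsub : P ∩ Set.Ioo p.1 j ⊆ endset c := by
          rintro x ⟨hxP, hx1, hx2⟩
          rcases mem_rays_or_endset hocw (show x ∈ vset w by rw [hPw]; exact hxP) with h | h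
          · exact absurd ⟨hx1, hj2 ▸ hx2⟩ (c.rays_cups_noncrossing p hp x h)
          · exact h
      -- membership in the biUnion
        refine Or.inr (Set.mem_biUnion hq ?_)
        exact ⟨hjP, hij, hEfin.subset hsub,
          le_trans (Set.ncard_le_ncard hsub hEfin) hEcard⟩
  have hinj : Set.InjOn uset {w : Weight | SubW w v} := by
    intro w1 hw1 w2 hw2 he
    exact eq_of_sim_of_uset_eq hw1.1 hw2.1 he
  have himg : uset '' {w : Weight | SubW w v} ⊆ {A : Set ℤ | A ⊆ F} := by
    rintro A ⟨w, hw, rfl⟩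
    exact hkey w hw
  exact Set.Finite.of_finite_image (hFfin.finite_subsets.subset himg) hinj

lemma subw_finite_of_dset_finite {v : Weight} (hfin : (dset v).Finite) :
    {w : Weight | SubW w v}.Finite := by
  classical
  set n := (dset v).ncard with hn
  set P := vset v with hP
  set F2 : Set ℤ :=
    {j | j ∈ P ∧ (P ∩ Set.Ioi j).Finite ∧ (P ∩ Set.Ioi j).ncard ≤ 3 * n} with hF2
  set F3 : Set ℤ := ⋃ q ∈ dset v,
    {j | j ∈ P ∧ j < q ∧ (P ∩ Set.Ioo j q).Finite ∧ (P ∩ Set.Ioo j q).ncard ≤ 2 * n} with hF3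
  set F : Set ℤ := (dset v ∪ F2) ∪ F3 with hF
  have hFfin : F.Finite := by
    refine (hfin.union ?_).union ?_
    · apply finite_of_small_right (n := 3 * n)
      intro j hj
      have hsub : F2 ∩ Set.Ioi j ⊆ P ∩ Set.Ioi j := fun x hx => ⟨hx.1.1, hx.2⟩
      exact ⟨hj.2.1.subset hsub, le_trans (Set.ncard_le_ncard hsub hj.2.1) hj.2.2⟩
    · refine Set.Finite.biUnion hfin ?_
      intro q _
      apply finite_of_small_right (n := 2 * n)
      intro j hj
      have hsub : {j | j ∈ P ∧ j < q ∧ (P ∩ Set.Ioo j q).Finite ∧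
          (P ∩ Set.Ioo j q).ncard ≤ 2 * n} ∩ Set.Ioi j ⊆ P ∩ Set.Ioo j q :=
        fun x hx => ⟨hx.1.1, hx.2, hx.1.2.1⟩
      exact ⟨hj.2.2.1.subset hsub, le_trans (Set.ncard_le_ncard hsub hj.2.2.1) hj.2.2.2⟩
  have hkey : ∀ w ∈ {w : Weight | SubW w v}, dset w ⊆ F := by
    rintro w ⟨hsim, c, hund, hocv⟩
    have hPw : vset w = P := Sim.vset_eq hsim
    obtain ⟨e⟩ := hsim.dset_equiv
    obtain ⟨hdsetfin, hdsetcard⟩ := finite_ncard_of_equiv e hfin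
    have hcupsn : c.cups.ncard ≤ n := by
      rw [hn, ← hdsetcard]
      exact hund.cups_ncard_le_dset hdsetfin
    have hocw := hund.1
    have hEfin := endset_finite c
    have hEcard : (endset c).ncard ≤ 2 * n := le_trans (endset_ncard_le c) (by omega)
    intro j hj
    have hjvw : j ∈ vset w := Or.inl hj
    have hjP : j ∈ P := by rw [← hPw]; exact hjvw
    rcases mem_rays_or_endset hocw hjvw with hray | hcup
    · -- ray case
      have hrays_down : c.rays ∩ Set.Ioi j ⊆ dset w := by
        rintro r ⟨hr, hrj⟩
        simp only [Set.mem_Ioi] at hrj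
        have hnp := hocw.2.2.2.2 j hray r hr hrj
        rcases hocw.2.2.2.1 r hr with h | h
        · exact h
        · exact absurd ⟨hj, h⟩ hnp
      have hsub : P ∩ Set.Ioi j ⊆ dset w ∪ endset c := by
        rintro x ⟨hxP, hxj⟩
        rcases mem_rays_or_endset hocw (show x ∈ vset w by rw [hPw]; exact hxP) with h | h
        · exact Or.inl (hrays_down ⟨h, hxj⟩)
        · exact Or.inr h
      have hfin2 : (P ∩ Set.Ioi j).Finite := (hdsetfin.union hEfin).subset hsub
      have hcard2 : (P ∩ Set.Ioi j).ncard ≤ 3 * n := by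
        have ha1 := Set.ncard_le_ncard hsub (hdsetfin.union hEfin)
        have ha2 := Set.ncard_union_le (dset w) (endset c)
        omega
      exact Or.inl (Or.inr ⟨hjP, hfin2, hcard2⟩)
    · -- cup case
      obtain ⟨p, hp, hjor⟩ := mem_endset.1 hcup
      have hj2 : j = p.1 := by
        rcases hjor with h | h
        · exact h
        · exfalso
          have hR := hund.cup_right hp
          rw [← h, show w.label j = some Label.down from hj] at hR
          simp at hR
      have hij : j < p.2 := hj2 ▸ c.cups_lt p hp
      rcases hocv.2.2.1 p hp with ⟨hv1, hv2⟩ | ⟨hv1, hv2⟩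
      · -- v p.1 = down, so j ∈ dset v
        exact Or.inl (Or.inl (show j ∈ dset v by rw [hj2]; exact hv1))
      · -- v p.2 = down: j belongs to F3
        have hq : p.2 ∈ dset v := hv2
        have hsub : P ∩ Set.Ioo j p.2 ⊆ endset c := by
          rintro x ⟨hxP, hx1, hx2⟩
          rcases mem_rays_or_endset hocw (show x ∈ vset w by rw [hPw]; exact hxP) with h | h
          · exact absurd ⟨hj2 ▸ hx1, hx2⟩ (c.rays_cups_noncrossing p hp x h)
          · exact h
        refine Or.inr (Set.mem_biUnion hq ?_)
        exact ⟨hjP, hij, hEfin.subset hsub,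
          le_trans (Set.ncard_le_ncard hsub hEfin) hEcard⟩
  have hinj : Set.InjOn dset {w : Weight | SubW w v} := by
    intro w1 hw1 w2 hw2 he
    exact eq_of_sim_of_dset_eq hw1.1 hw2.1 he
  have himg : dset '' {w : Weight | SubW w v} ⊆ {A : Set ℤ | A ⊆ F} := by
    rintro A ⟨w, hw, rfl⟩
    exact hkey w hw
  exact Set.Finite.of_finite_image (hFfin.finite_subsets.subset himg) hinj

end Statement5C

/-- Let `Λ` be a block and `λ ∈ Λ`. The set of weights `μ` with `μ ⊂ λ` is
finite if and only if `def(Λ) = sup {def(μ) : μ ∈ Λ} < ∞`. -/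
theorem statement_5 (Λ : Set Weight) (hΛ : IsBlock Λ) (v : Weight) (hv : v ∈ Λ) :
    {w : Weight | SubW w v}.Finite ↔
      ∃ N : ℕ, ∀ w ∈ Λ, ∀ c : ArcDiagram, IsUnderline w c → c.cups.ncard ≤ N := by
  constructor
  · intro hfin
    by_cases hud : (uset v).Finite ∨ (dset v).Finite
    · exact bound_of_min_finite hΛ hv hud
    · push_neg at hud
      exact absurd hfin (subw_infinite_of_both_infinite hud.2 hud.1)
  · rintro ⟨N, hN⟩
    by_cases hud : (uset v).Finite ∨ (dset v).Finite
    · rcases hud with h | h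
      · exact subw_finite_of_uset_finite h
      · exact subw_finite_of_dset_finite h
    · push_neg at hud
      obtain ⟨w, hsim, c, hc, hgt⟩ := no_bound_of_both_infinite hud.2 hud.1 N
      have hwΛ : w ∈ Λ := by
        obtain ⟨w0, rfl⟩ := hΛ
        exact Sim.trans' hv hsim
      exact absurd (hN w hwΛ c hc) (not_le.2 hgt)
end BrundanStroppel
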